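/- For δ > 0 and λ ∈ (−1,0), define the 2×2 real matrices A(δ,λ) = [[cosh(δ√(1−λ)), sinh(δ√(1−λ))/√(1−λ)], [√(1−λ)·sinh(δ√(1−λ)), cosh(δ√(1−λ))]] and B(δ,λ) = [[cos(δ√(1+λ)), sin(δ√(1+λ))/√(1+λ)], [−√(1+λ)·sin(δ√(1+λ)), cos(δ√(1+λ))]], and set Δ_δ(λ) = tr(A(δ,λ)·B(δ,λ)). Then there exist C > 0 and δ₀ > 0 such that for all δ ∈ (0,δ₀) and all λ ∈ (−1,0): | Δ_δ(λ) − 2 + 4λδ² | ≤ C δ³. -/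

import Mathlib

open MeasureTheory


private lemma half_bound (X Y bX bY : ℝ) (h1 : |X| ≤ bX) (h2 : |Y| ≤ bY) :
    |(X + Y) / 2| ≤ (bX + bY) / 2 := by
  rw [abs_div, abs_two]
  have := abs_add_le X Y
  linarith

lemma exp_taylor4 (x : ℝ) (hx : |x| ≤ 1) :
    |Real.exp x - (1 + x + x ^ 2 / 2 + x ^ 3 / 6)| ≤ |x| ^ 4 * (5 / 96) := by
  have h := Real.exp_bound hx (n := 4) (by norm_num)
  have hs : (∑ m ∈ Finset.range 4, x ^ m / m.factorial) = 1 + x + x ^ 2 / 2 + x ^ 3 / 6 := by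
    rw [Finset.sum_range_succ, Finset.sum_range_succ, Finset.sum_range_succ,
      Finset.sum_range_succ, Finset.sum_range_zero]
    norm_num [Nat.factorial]
  rw [hs] at h
  norm_num [Nat.factorial] at h
  exact h

lemma cosh_taylor (x : ℝ) (hx : |x| ≤ 1) :
    |Real.cosh x - (1 + x ^ 2 / 2)| ≤ x ^ 4 := by
  have h1 := exp_taylor4 x hx
  have h2 := exp_taylor4 (-x) (by rwa [abs_neg])
  rw [abs_neg] at h2
  have hc : Real.cosh x - (1 + x ^ 2 / 2) =
      ((Real.exp x - (1 + x + x ^ 2 / 2 + x ^ 3 / 6)) +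
       (Real.exp (-x) - (1 + (-x) + (-x) ^ 2 / 2 + (-x) ^ 3 / 6))) / 2 := by
    rw [Real.cosh_eq]; ring
  rw [hc]
  have hx4 : |x| ^ 4 = x ^ 4 := by
    rw [← abs_pow, abs_of_nonneg (by positivity)]
  have := half_bound _ _ _ _ h1 h2
  nlinarith [pow_nonneg (abs_nonneg x) 4]

lemma sinh_taylor (x : ℝ) (hx : |x| ≤ 1) :
    |Real.sinh x - x| ≤ |x| ^ 3 := by
  have h1 := exp_taylor4 x hx
  have h2 := exp_taylor4 (-x) (by rwa [abs_neg])
  rw [abs_neg] at h2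
  have h2' : |-(Real.exp (-x) - (1 + (-x) + (-x) ^ 2 / 2 + (-x) ^ 3 / 6))| ≤ |x| ^ 4 * (5/96) := by
    rwa [abs_neg]
  have hc : Real.sinh x - x =
      ((Real.exp x - (1 + x + x ^ 2 / 2 + x ^ 3 / 6)) +
       -(Real.exp (-x) - (1 + (-x) + (-x) ^ 2 / 2 + (-x) ^ 3 / 6))) / 2 + x ^ 3 / 6 := by
    rw [Real.sinh_eq]; ring
  rw [hc]
  have h4le3 : |x| ^ 4 ≤ |x| ^ 3 := pow_le_pow_of_le_one (abs_nonneg x) hx (by norm_num)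
  have hh := half_bound _ _ _ _ h1 h2'
  have ht := abs_add_le (((Real.exp x - (1 + x + x ^ 2 / 2 + x ^ 3 / 6)) +
       -(Real.exp (-x) - (1 + (-x) + (-x) ^ 2 / 2 + (-x) ^ 3 / 6))) / 2) (x ^ 3 / 6)
  have hx3 : |x ^ 3 / 6| ≤ |x| ^ 3 / 6 := by
    rw [abs_div, abs_pow]; norm_num
  have h3n : (0:ℝ) ≤ |x| ^ 3 := pow_nonneg (abs_nonneg x) 3
  nlinarith

lemma cos_taylor (x : ℝ) (hx : |x| ≤ 1) :
    |Real.cos x - (1 - x ^ 2 / 2)| ≤ x ^ 4 := by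
  have h := Real.cos_bound hx
  have hx4 : |x| ^ 4 = x ^ 4 := by rw [← abs_pow, abs_of_nonneg (by positivity)]
  nlinarith [pow_nonneg (abs_nonneg x) 4]

lemma sin_taylor (x : ℝ) (hx : |x| ≤ 1) :
    |Real.sin x - x| ≤ |x| ^ 3 := by
  have h := Real.sin_bound hx
  have h4le3 : |x| ^ 4 ≤ |x| ^ 3 := pow_le_pow_of_le_one (abs_nonneg x) hx (by norm_num)
  have hc : Real.sin x - x = (Real.sin x - (x - x ^ 3 / 6)) + -(x ^ 3 / 6) := by ring
  rw [hc]
  have ht := abs_add_le (Real.sin x - (x - x ^ 3 / 6)) (-(x ^ 3 / 6))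
  have hx3 : |-(x ^ 3 / 6)| ≤ |x| ^ 3 / 6 := by
    rw [abs_neg, abs_div, abs_pow]; norm_num
  have h3n : (0:ℝ) ≤ |x| ^ 3 := pow_nonneg (abs_nonneg x) 3
  nlinarith [pow_le_pow_of_le_one (abs_nonneg x) hx (by norm_num : 4 ≤ 5)]

/-- Transfer matrix over `[0,δ]` for the constant potential `+1` at energy `λ ∈ (−1,0)`. -/
noncomputable def Amat (δ lam : ℝ) : Matrix (Fin 2) (Fin 2) ℝ :=
  !![Real.cosh (δ * Real.sqrt (1 - lam)),
      Real.sinh (δ * Real.sqrt (1 - lam)) / Real.sqrt (1 - lam);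
    Real.sqrt (1 - lam) * Real.sinh (δ * Real.sqrt (1 - lam)),
      Real.cosh (δ * Real.sqrt (1 - lam))]

/-- Transfer matrix over `[δ,2δ]` for the constant potential `−1` at energy `λ ∈ (−1,0)`. -/
noncomputable def Bmat (δ lam : ℝ) : Matrix (Fin 2) (Fin 2) ℝ :=
  !![Real.cos (δ * Real.sqrt (1 + lam)),
      Real.sin (δ * Real.sqrt (1 + lam)) / Real.sqrt (1 + lam);
    -(Real.sqrt (1 + lam) * Real.sin (δ * Real.sqrt (1 + lam))),
      Real.cos (δ * Real.sqrt (1 + lam))]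

/-- The discriminant `Δ_δ(λ) = tr(A(δ,λ)·B(δ,λ))` of the `2δ`-periodic square-wave
potential at energy `λ`. -/
noncomputable def discr (δ lam : ℝ) : ℝ := Matrix.trace (Amat δ lam * Bmat δ lam)

set_option maxHeartbeats 1000000 in
/-- `Δ_δ(λ) = 2 − 4λδ² + O(δ³)` uniformly in `λ ∈ (−1,0)` as `δ ↓ 0`. -/
theorem discriminant_expansion :
    ∃ C : ℝ, 0 < C ∧ ∃ δ₀ : ℝ, 0 < δ₀ ∧
      ∀ δ : ℝ, δ ∈ Set.Ioo 0 δ₀ → ∀ lam : ℝ, lam ∈ Set.Ioo (-1 : ℝ) 0 →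
        |discr δ lam - 2 + 4 * lam * δ ^ 2| ≤ C * δ ^ 3 := by
  refine ⟨64, by norm_num, 1/2, by norm_num, ?_⟩
  rintro δ ⟨hδ0, hδh⟩ lam ⟨hl1, hl0⟩
  have hD : discr δ lam = 2 * Real.cosh (δ * Real.sqrt (1 - lam)) * Real.cos (δ * Real.sqrt (1 + lam))
      + (Real.sqrt (1 - lam) * Real.sinh (δ * Real.sqrt (1 - lam)) *
          (Real.sin (δ * Real.sqrt (1 + lam)) / Real.sqrt (1 + lam))
        - Real.sinh (δ * Real.sqrt (1 - lam)) / Real.sqrt (1 - lam) *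
          (Real.sqrt (1 + lam) * Real.sin (δ * Real.sqrt (1 + lam)))) := by
    simp [discr, Amat, Bmat, Matrix.trace_fin_two, Matrix.mul_apply, Fin.sum_univ_two]
    ring
  set su := Real.sqrt (1 - lam) with hsu_def
  set sv := Real.sqrt (1 + lam) with hsv_def
  have hsu2 : su ^ 2 = 1 - lam := Real.sq_sqrt (by linarith)
  have hsv2 : sv ^ 2 = 1 + lam := Real.sq_sqrt (by linarith)
  have hsu_pos : 0 < su := Real.sqrt_pos.2 (by linarith)
  have hsv_pos : 0 < sv := Real.sqrt_pos.2 (by linarith)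
  have hsu_le : su ≤ 3/2 := by
    have h := Real.sqrt_le_sqrt (show 1 - lam ≤ 9/4 by linarith)
    rwa [show (9/4 : ℝ) = (3/2)^2 by norm_num, Real.sqrt_sq (by norm_num : (0:ℝ) ≤ 3/2)] at h
  have hsv_le : sv ≤ 1 := Real.sqrt_le_one.mpr (by linarith)
  set a := δ * su with ha_def
  set b := δ * sv with hb_def
  have ha_pos : 0 < a := by positivity
  have hb_pos : 0 < b := by positivity
  have ha_le : a ≤ 3/4 := by
    have := mul_le_mul hδh.le hsu_le hsu_pos.le (by norm_num : (0:ℝ) ≤ 1/2)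
    rw [ha_def]; linarith
  have hb_le : b ≤ 1/2 := by
    have := mul_le_mul hδh.le hsv_le hsv_pos.le (by norm_num : (0:ℝ) ≤ 1/2)
    rw [hb_def]; linarith
  have ha2 : a ^ 2 = δ ^ 2 * (1 - lam) := by rw [ha_def, mul_pow, hsu2]
  have hb2 : b ^ 2 = δ ^ 2 * (1 + lam) := by rw [hb_def, mul_pow, hsv2]
  have ha2le : a ^ 2 ≤ 2 * δ ^ 2 := by
    rw [ha2]
    have := mul_le_mul_of_nonneg_left (show 1 - lam ≤ 2 by linarith) (sq_nonneg δ)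
    linarith
  have hb2le : b ^ 2 ≤ δ ^ 2 := by
    rw [hb2]
    have := mul_le_mul_of_nonneg_left (show 1 + lam ≤ 1 by linarith) (sq_nonneg δ)
    linarith
  have haa : |a| ≤ 1 := by rw [abs_of_pos ha_pos]; linarith
  have hbb : |b| ≤ 1 := by rw [abs_of_pos hb_pos]; linarith
  have hδ2 : δ ^ 2 ≤ 1/4 := by
    have h := mul_le_mul hδh.le hδh.le hδ0.le (by norm_num : (0:ℝ) ≤ 1/2)
    calc δ ^ 2 = δ * δ := by ring
      _ ≤ 1/4 := by linarith
  have hδ4pos : (0:ℝ) < δ ^ 4 := by positivity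
  have hδ4le : δ ^ 4 ≤ 1/16 := by
    have h := pow_le_pow_left₀ (sq_nonneg δ) hδ2 2
    calc δ ^ 4 = (δ ^ 2) ^ 2 := by ring
      _ ≤ (1/4) ^ 2 := h
      _ = 1/16 := by norm_num
  have ha4 : a ^ 4 ≤ 4 * δ ^ 4 := by
    calc a ^ 4 = (a ^ 2) ^ 2 := by ring
      _ ≤ (2 * δ ^ 2) ^ 2 := pow_le_pow_left₀ (sq_nonneg a) ha2le 2
      _ = 4 * δ ^ 4 := by ring
  have hb4 : b ^ 4 ≤ δ ^ 4 := by
    calc b ^ 4 = (b ^ 2) ^ 2 := by ring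
      _ ≤ (δ ^ 2) ^ 2 := pow_le_pow_left₀ (sq_nonneg b) hb2le 2
      _ = δ ^ 4 := by ring
  set e1 := Real.cosh a - (1 + a ^ 2 / 2) with he1_def
  set e2 := Real.cos b - (1 - b ^ 2 / 2) with he2_def
  set e3 := Real.sinh a - a with he3_def
  set e4 := Real.sin b - b with he4_def
  have he1 : |e1| ≤ 4 * δ ^ 4 := (cosh_taylor a haa).trans ha4
  have he2 : |e2| ≤ δ ^ 4 := (cos_taylor b hbb).trans hb4
  have he3 : |e3| ≤ a ^ 3 := by
    have := sinh_taylor a haa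
    rwa [abs_of_pos ha_pos] at this
  have he4 : |e4| ≤ b ^ 3 := by
    have := sin_taylor b hbb
    rwa [abs_of_pos hb_pos] at this
  have hsinb_nonneg : 0 ≤ Real.sin b :=
    Real.sin_nonneg_of_nonneg_of_le_pi hb_pos.le (by linarith [Real.pi_gt_three])
  have hsinb_le : Real.sin b ≤ b := Real.sin_le hb_pos.le
  clear_value e1 e2 e3 e4
  have hD2 : su * Real.sinh a * (Real.sin b / sv) - Real.sinh a / su * (sv * Real.sin b)
      = (-2 * lam) * (Real.sinh a * Real.sin b) / (su * sv) := by
    field_simp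
    linear_combination (Real.sin b) * hsu2 -
      (Real.sin b) * hsv2
  -- second-term bound
  have hab : a * b = δ ^ 2 * (su * sv) := by rw [ha_def, hb_def]; ring
  have hQeq : Real.sinh a * Real.sin b / (su * sv) - δ ^ 2
      = (Real.sinh a * Real.sin b - a * b) / (su * sv) := by
    field_simp
    linear_combination -hab
  have hnum : |Real.sinh a * Real.sin b - a * b| ≤ a ^ 3 * b + a * b ^ 3 := by
    have hid : Real.sinh a * Real.sin b - a * b = e3 * Real.sin b + a * e4 := by
      rw [he3_def, he4_def]; ring
    rw [hid]
    calc |e3 * Real.sin b + a * e4| ≤ |e3 * Real.sin b| + |a * e4| := abs_add_le _ _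
      _ = |e3| * |Real.sin b| + |a| * |e4| := by rw [abs_mul, abs_mul]
      _ ≤ a ^ 3 * b + a * b ^ 3 := by
          rw [abs_of_nonneg hsinb_nonneg, abs_of_pos ha_pos]
          linarith [mul_nonneg (sub_nonneg.2 he3) hsinb_nonneg,
            mul_nonneg ha_pos.le (sub_nonneg.2 he4),
            mul_le_mul_of_nonneg_left hsinb_le (pow_nonneg ha_pos.le 3)]
  have hfr : (a ^ 3 * b + a * b ^ 3) / (su * sv) = δ ^ 2 * (a ^ 2 + b ^ 2) := by
    field_simp
    linear_combination (a ^ 2 + b ^ 2) * hab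
  have hQ : |Real.sinh a * Real.sin b / (su * sv) - δ ^ 2| ≤ 3 * δ ^ 4 := by
    rw [hQeq, abs_div, abs_of_pos (mul_pos hsu_pos hsv_pos)]
    have h1 : |Real.sinh a * Real.sin b - a * b| / (su * sv)
        ≤ (a ^ 3 * b + a * b ^ 3) / (su * sv) :=
      (div_le_div_iff_of_pos_right (mul_pos hsu_pos hsv_pos)).2 hnum
    have h2 : δ ^ 2 * (a ^ 2 + b ^ 2) ≤ 3 * δ ^ 4 := by
      have := mul_le_mul_of_nonneg_left (add_le_add ha2le hb2le) (sq_nonneg δ)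
      linarith
    calc |Real.sinh a * Real.sin b - a * b| / (su * sv)
        ≤ (a ^ 3 * b + a * b ^ 3) / (su * sv) := h1
      _ = δ ^ 2 * (a ^ 2 + b ^ 2) := hfr
      _ ≤ 3 * δ ^ 4 := h2
  -- first-term bound
  have hTid : 2 * Real.cosh a * Real.cos b - 2 - (a ^ 2 - b ^ 2)
      = 2 * e1 + 2 * e2 + a ^ 2 * e2 - b ^ 2 * e1 + 2 * (e1 * e2) - a ^ 2 * b ^ 2 / 2 := by
    have hca : Real.cosh a = 1 + a ^ 2 / 2 + e1 := by rw [he1_def]; ring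
    have hcb : Real.cos b = 1 - b ^ 2 / 2 + e2 := by rw [he2_def]; ring
    rw [hca, hcb]; ring
  have hδ62 : δ ^ 4 * δ ^ 2 ≤ δ ^ 4 * (1/4) := mul_le_mul_of_nonneg_left hδ2 hδ4pos.le
  have hδ88 : δ ^ 4 * δ ^ 4 ≤ δ ^ 4 * (1/16) := mul_le_mul_of_nonneg_left hδ4le hδ4pos.le
  have t3 : |a ^ 2 * e2| ≤ δ ^ 4 := by
    rw [abs_mul, abs_of_nonneg (sq_nonneg a)]
    have h := mul_le_mul ha2le he2 (abs_nonneg e2) (by positivity)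
    linarith
  have t4 : |b ^ 2 * e1| ≤ δ ^ 4 := by
    rw [abs_mul, abs_of_nonneg (sq_nonneg b)]
    have h := mul_le_mul hb2le he1 (abs_nonneg e1) (by positivity)
    linarith
  have t5 : |e1 * e2| ≤ δ ^ 4 := by
    rw [abs_mul]
    have h := mul_le_mul he1 he2 (abs_nonneg e2) (by positivity)
    linarith
  have t6 : a ^ 2 * b ^ 2 / 2 ≤ δ ^ 4 := by
    have := mul_le_mul ha2le hb2le (sq_nonneg b) (by positivity : (0:ℝ) ≤ 2 * δ ^ 2)
    linarith
  have hT : |2 * Real.cosh a * Real.cos b - 2 - (a ^ 2 - b ^ 2)| ≤ 20 * δ ^ 4 := by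
    rw [hTid, abs_le]
    rw [abs_le] at he1 he2 t3 t4 t5
    have h6 : (0:ℝ) ≤ a ^ 2 * b ^ 2 / 2 := by positivity
    constructor <;>
      linarith [he1.1, he1.2, he2.1, he2.2, t3.1, t3.2, t4.1, t4.2, t5.1, t5.2, t6, h6]
  -- combine
  have hX : discr δ lam - 2 + 4 * lam * δ ^ 2
      = (2 * Real.cosh a * Real.cos b - 2 - (a ^ 2 - b ^ 2))
        + (-2 * lam) * (Real.sinh a * Real.sin b / (su * sv) - δ ^ 2) := by
    rw [hD, hD2]
    field_simp
    linear_combination (su * sv) * ha2 - (su * sv) * hb2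
  rw [hX]
  have hW : |(-2 * lam) * (Real.sinh a * Real.sin b / (su * sv) - δ ^ 2)| ≤ 2 * (3 * δ ^ 4) := by
    rw [abs_mul]
    have hl : |(-2) * lam| ≤ 2 := by
      rw [abs_of_pos (by linarith : (0:ℝ) < -2 * lam)]; linarith
    exact mul_le_mul hl hQ (abs_nonneg _) (by norm_num)
  have hd : δ ^ 4 ≤ δ ^ 3 / 2 := by
    have h := mul_le_mul_of_nonneg_left hδh.le (pow_pos hδ0 3).le
    calc δ ^ 4 = δ ^ 3 * δ := by ring
      _ ≤ δ ^ 3 * (1/2) := h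
      _ = δ ^ 3 / 2 := by ring
  rw [abs_le]
  rw [abs_le] at hT hW
  constructor <;> linarith [hT.1, hT.2, hW.1, hW.2, (pow_pos hδ0 3).le, hd]
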